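/- Let f be a formal Laurent series over ℂ such that f ∈ Ξ and g·f ∈ Ξ, where g is a power series (no pole) whose value g(0) may be nonzero, and where Ξ is the space of Laurent series whose even part is a power series. If moreover (g - g(0))·f ∈ Ξ, then f has a pole of order at most 1. -/

import Mathlib

/-- The space `Ξ` of Laurent series whose polar part is odd under `t ↦ -t`. -/
def Xi : Set (LaurentSeries ℂ) :=
  {f | ∀ n : ℤ, n < 0 → f.coeff n + (-1 : ℂ) ^ n * f.coeff n = 0}

lemma ofPS_coeff_neg (p : PowerSeries ℂ) {n : ℤ} (hn : n < 0) :
    (HahnSeries.ofPowerSeries ℤ ℂ p).coeff n = 0 := by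
  rw [HahnSeries.ofPowerSeries_apply]
  apply HahnSeries.embDomain_notin_image_support
  rintro ⟨m, -, hm⟩
  have hm' : ((m : ℤ)) = n := hm
  omega

lemma ofPS_order_nonneg (p : PowerSeries ℂ) (hp : HahnSeries.ofPowerSeries ℤ ℂ p ≠ 0) :
    0 ≤ (HahnSeries.ofPowerSeries ℤ ℂ p).order := by
  by_contra h
  exact (HahnSeries.coeff_order_eq_zero.not.2 hp) (ofPS_coeff_neg p (by omega))

/-- If `f ∈ Ξ`, `g·f ∈ Ξ` and `(g - g(0))·f ∈ Ξ`, where `g` is a power series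
whose shift `g - g(0)` has a simple zero (`g'(0) ≠ 0`), then `f` has a pole of
order at most `1`. -/
theorem pole_order_le_one_of_Xi (f : LaurentSeries ℂ) (g : PowerSeries ℂ)
    (hg : PowerSeries.coeff 1 g ≠ 0)
    (hf : f ∈ Xi)
    (hgf : (HahnSeries.ofPowerSeries ℤ ℂ g) * f ∈ Xi)
    (hgf0 : (HahnSeries.ofPowerSeries ℤ ℂ
      (g - PowerSeries.C (PowerSeries.constantCoeff g))) * f ∈ Xi) :
    ∀ n : ℤ, n ≤ -2 → f.coeff n = 0 := by
  intro n hn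
  by_contra hne
  have hf0 : f ≠ 0 := by
    intro h; exact hne (by simp [h])
  set N : ℤ := f.order with hN
  have hNle : N ≤ n := HahnSeries.order_le_of_coeff_ne_zero hne
  have hN2 : N ≤ -2 := hNle.trans hn
  have hfN : f.coeff N ≠ 0 := HahnSeries.coeff_order_eq_zero.not.2 hf0
  rcases Int.even_or_odd N with hev | hodd
  · -- even order: contradiction with f ∈ Ξ
    have := hf N (by omega)
    rw [hev.neg_one_zpow, one_mul] at this
    exact hfN (by linear_combination this / 2)
  · -- odd order
    set h₀ : PowerSeries ℂ := g - PowerSeries.C (PowerSeries.constantCoeff g) with hh₀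
    have hc0 : PowerSeries.constantCoeff h₀ = 0 := by
      simp [hh₀]
    obtain ⟨q, hq⟩ := PowerSeries.X_dvd_iff.mpr hc0
    have hq0 : PowerSeries.constantCoeff q = PowerSeries.coeff 1 g := by
      have h1 : PowerSeries.coeff 1 h₀ = PowerSeries.coeff 1 g := by
        simp [hh₀, PowerSeries.coeff_C]
      rw [hq] at h1
      rw [← h1]
      have := PowerSeries.coeff_succ_X_mul 0 q
      simpa [PowerSeries.coeff_zero_eq_constantCoeff] using this.symm
    -- split q = C q₀ + X * r
    set q₀ : ℂ := PowerSeries.constantCoeff q with hq₀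
    have hcq : PowerSeries.constantCoeff (q - PowerSeries.C q₀) = 0 := by simp [hq₀]
    obtain ⟨r, hr⟩ := PowerSeries.X_dvd_iff.mpr hcq
    have hqeq : q = PowerSeries.C q₀ + PowerSeries.X * r := by
      rw [← hr]; ring
    -- compute (h₀ * f).coeff (N + 1)
    have key : ((HahnSeries.ofPowerSeries ℤ ℂ h₀) * f).coeff (N + 1) = q₀ * f.coeff N := by
      rw [hq, map_mul, HahnSeries.ofPowerSeries_X, mul_assoc,
        HahnSeries.coeff_single_mul_add]
      rw [hqeq, map_add, map_mul, add_mul, HahnSeries.coeff_add,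
        HahnSeries.ofPowerSeries_C, HahnSeries.ofPowerSeries_X]
      have hC : (HahnSeries.C q₀ * f).coeff N = q₀ * f.coeff N := by
        rw [HahnSeries.C_apply, HahnSeries.coeff_single_zero_mul]
      have hX : ((HahnSeries.single (1 : ℤ) (1 : ℂ)) *
          ((HahnSeries.ofPowerSeries ℤ ℂ r) * f)).coeff N = 0 := by
        have : N = (N - 1) + 1 := by ring
        rw [this, HahnSeries.coeff_single_mul_add, one_mul]
        by_cases hr0 : (HahnSeries.ofPowerSeries ℤ ℂ r) = 0
        · simp [hr0]
        · by_cases hrf : (HahnSeries.ofPowerSeries ℤ ℂ r) * f = 0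
          · simp [hrf]
          · apply HahnSeries.coeff_eq_zero_of_lt_order
            rw [HahnSeries.order_mul hr0 hf0]
            have := ofPS_order_nonneg r hr0
            omega
      rw [hC, one_mul, mul_assoc, hX, add_zero]
    -- use hgf0
    have hXi := hgf0 (N + 1) (by omega)
    have hpow : ((-1 : ℂ) ^ (N + 1) : ℂ) = 1 := by
      have : Even (N + 1) := by
        rcases hodd with ⟨k, hk⟩
        exact ⟨k + 1, by omega⟩
      exact this.neg_one_zpow
    rw [hpow, one_mul, key] at hXi
    have hq0' : q₀ ≠ 0 := by rw [hq0]; exact hg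
    have : q₀ * f.coeff N = 0 := by linear_combination hXi / 2
    exact hfN ((mul_eq_zero.mp this).resolve_left hq0')
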